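/- arXiv:0802.0677 — 3 statements merged into one kernel-verified Lean document; each statement's English description precedes it below -/
import Mathlib

section
/- For the family f_a(x) = sin(a·x), there exists λ > 0 such that for all distinct α, β ∈ ℝ with α/β irrational (β ≠ 0), there exists z ∈ ℝ with |f_α(z) − f_β(z)| > λ. -/
open Real

lemma sinGtHalf {x : ℝ} (h1 : π/6 < x) (h2 : x < 5*π/6) : Real.sin x > (1:ℝ)/2 := by
  have hpi := Real.pi_pos
  have h3 : |x - π/2| < π/3 := by rw [abs_lt]; constructor <;> nlinarith
  have h4 : Real.cos (π/3) < Real.cos |x - π/2| :=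
    Real.cos_lt_cos_of_nonneg_of_le_pi (abs_nonneg _) (by nlinarith) h3
  rw [Real.cos_pi_div_three, Real.cos_abs, Real.cos_sub_pi_div_two] at h4
  exact h4

-- helper B
lemma exists_mul_mem {δ : ℝ} (h0 : 0 < δ) (h2 : δ < 1/2) :
    ∃ m : ℕ, 1/6 < m*δ ∧ m*δ < 2/3 := by
  refine ⟨⌊1/(6*δ)⌋₊ + 1, ?_, ?_⟩
  · have := Nat.lt_floor_add_one (1/(6*δ))
    push_cast
    calc 1/6 = (1/(6*δ))*δ := by field_simp
    _ < (⌊1/(6*δ)⌋₊ + 1)*δ := by apply mul_lt_mul_of_pos_right this h0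
  · have h1 : (⌊1/(6*δ)⌋₊ : ℝ) ≤ 1/(6*δ) := Nat.floor_le (by positivity)
    have : (⌊1/(6*δ)⌋₊ : ℝ)*δ ≤ 1/6 := by
      calc (⌊1/(6*δ)⌋₊ : ℝ)*δ ≤ (1/(6*δ))*δ := by
            apply mul_le_mul_of_nonneg_right h1 h0.le
      _ = 1/6 := by field_simp
    push_cast
    nlinarith

lemma abs_sin_add_int_mul_pi (x : ℝ) (n : ℤ) : |Real.sin (x + n * π)| = |Real.sin x| := by
  rw [Real.sin_add_int_mul_pi, abs_mul]
  have : |((-1:ℝ)) ^ n| = 1 := by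
    rcases Int.even_or_odd n with h | h
    · rw [h.neg_one_zpow]; simp
    · rw [Odd.neg_one_zpow h]; simp
  rw [this, one_mul]

lemma keyD {t : ℝ} (ht : Irrational t) : ∃ k : ℤ, 1/2 < |Real.sin (k * π * t)| := by
  have hpi := Real.pi_pos
  set θ := Int.fract t with hθdef
  have hθirr : Irrational θ := by
    rw [hθdef, ← Int.self_sub_floor]; exact Irrational.sub_intCast ht _
  have hθ0 : 0 < θ := lt_of_le_of_ne (Int.fract_nonneg t) (by
    intro h; exact (hθirr.ne_int 0 (by exact_mod_cast h.symm)))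
  have hθ1 : θ < 1 := Int.fract_lt_one t
  have hθhalf : θ ≠ 1/2 := by
    intro h; exact hθirr ⟨1/2, by rw [h]; norm_num⟩
  have hteq : (t : ℝ) = (⌊t⌋ : ℝ) + θ := by rw [hθdef]; exact (Int.floor_add_fract t).symm
  have key : ∀ m : ℕ, |Real.sin ((m:ℤ) * π * t)| = |Real.sin (m * π * θ)| := by
    intro m
    have : ((m:ℤ):ℝ) * π * t = m * π * θ + ((m * ⌊t⌋ : ℤ)) * π := by
      push_cast
      linear_combination ((m:ℝ) * π) * hteq
    rw [this]
    exact_mod_cast abs_sin_add_int_mul_pi (m * π * θ) (m * ⌊t⌋)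
  rcases lt_or_gt_of_ne hθhalf with hc | hc
  · obtain ⟨m, hm1, hm2⟩ := exists_mul_mem hθ0 hc
    refine ⟨m, ?_⟩
    rw [key m]
    have h1 : π/6 < m * π * θ := by nlinarith
    have h2 : m * π * θ < 5*π/6 := by nlinarith
    have := sinGtHalf h1 h2
    calc (1:ℝ)/2 < Real.sin (m * π * θ) := this
    _ ≤ |Real.sin (m * π * θ)| := le_abs_self _
  · set δ := 1 - θ with hδdef
    have hδ0 : 0 < δ := by rw [hδdef]; linarith
    have hδ2 : δ < 1/2 := by rw [hδdef]; linarith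
    obtain ⟨m, hm1, hm2⟩ := exists_mul_mem hδ0 hδ2
    refine ⟨m, ?_⟩
    rw [key m]
    have heq : (m:ℝ) * π * θ = -(m * π * δ) + (m:ℤ) * π := by
      rw [hδdef]; push_cast; ring
    rw [heq, abs_sin_add_int_mul_pi, Real.sin_neg, abs_neg]
    have h1 : π/6 < m * π * δ := by nlinarith
    have h2 : m * π * δ < 5*π/6 := by nlinarith
    have := sinGtHalf h1 h2
    calc (1:ℝ)/2 < Real.sin (m * π * δ) := this
    _ ≤ |Real.sin (m * π * δ)| := le_abs_self _

theorem stmt2 :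
    ∃ l > 0, ∀ α β : ℝ, α ≠ β → β ≠ 0 → Irrational (α / β) →
      ∃ z : ℝ, |Real.sin (α * z) - Real.sin (β * z)| > l := by
  refine ⟨1, one_pos, fun α β hne hβ hirr => ?_⟩
  have hpi := Real.pi_pos
  -- α + β ≠ 0
  have hs : α + β ≠ 0 := by
    intro h
    have : α / β = -1 := by
      have : α = -β := by linarith
      rw [this]; field_simp
    exact hirr ⟨-1, by rw [this]; norm_num⟩
  -- t irrational
  set t := (α - β) / (α + β) with htdef
  have htirr : Irrational t := by
    rintro ⟨r, hr⟩
    have hr1 : (r:ℝ) ≠ 1 := by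
      intro h
      have : α - β = α + β := by
        rw [htdef] at hr; field_simp at hr
        rw [h] at hr; linarith [hr]
      exact hβ (by linarith)
    have hab : α - β = r * (α + β) := by
      rw [htdef] at hr; field_simp at hr; linarith [hr]
    apply hirr
    refine ⟨(1 + r) / (1 - r), ?_⟩
    have h1r : (1:ℝ) - r ≠ 0 := by
      intro h; exact hr1 (by linarith)
    push_cast
    rw [div_eq_div_iff (by exact_mod_cast h1r) hβ]
    ring_nf
    nlinarith [hab]
  obtain ⟨k, hk⟩ := keyD htirr
  refine ⟨2 * k * π / (α + β), ?_⟩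
  have hz1 : (α * (2 * k * π / (α + β)) - β * (2 * k * π / (α + β))) / 2 = k * π * t := by
    rw [htdef]; field_simp
  have hz2 : (α * (2 * k * π / (α + β)) + β * (2 * k * π / (α + β))) / 2 = k * π := by
    field_simp
  rw [Real.sin_sub_sin, hz1, hz2, abs_mul, abs_mul, Real.abs_cos_int_mul_pi, mul_one]
  have : |(2:ℝ)| = 2 := by norm_num
  rw [this]
  linarith [hk]
end

section
/- If α and β are real numbers such that β − α is an irrational multiple of 2π (i.e. (β − α)/(2π) is irrational), then the set {((α·n) mod 2π, (β·n) mod 2π) : n ∈ ℕ} is not contained in any finite union of points; concretely, the sequence n ↦ sin(α·n) − sin(β·n) takes infinitely many distinct values. -/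
open Complex

open Matrix in
lemma vand_indep {r : ℕ} (lam : Fin r → ℂ) (hinj : Function.Injective lam)
    (h0 : ∀ i, lam i ≠ 0) (c : Fin r → ℂ) (n : ℕ)
    (H : ∀ j : Fin r, ∑ i, c i * lam i ^ (n + (j : ℕ)) = 0) : ∀ i, c i = 0 := by
  set x : Fin r → ℂ := fun i => c i * lam i ^ n with hx
  set M : Matrix (Fin r) (Fin r) ℂ := (Matrix.vandermonde lam)ᵀ with hM
  have hdet : M.det ≠ 0 := by
    rw [hM, Matrix.det_transpose, Matrix.det_vandermonde]
    refine Finset.prod_ne_zero_iff.2 fun i _ => Finset.prod_ne_zero_iff.2 fun j hj => ?_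
    have : i ≠ j := fun e => absurd hj (by simp [e])
    exact sub_ne_zero.2 fun e => this (hinj e.symm)
  have hmv : M.mulVec x = 0 := by
    funext j
    have := H j
    simp only [Matrix.mulVec, dotProduct, hM, Matrix.transpose_apply, Matrix.vandermonde, hx,
      Matrix.of_apply, Pi.zero_apply]
    rw [← this]
    exact Finset.sum_congr rfl fun i _ => by rw [pow_add]; ring
  have hx0 : x = 0 := Matrix.eq_zero_of_mulVec_eq_zero hdet hmv
  intro i
  have : c i * lam i ^ n = 0 := congrFun hx0 i
  exact (mul_eq_zero.1 this).resolve_right (pow_ne_zero _ (h0 i))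

lemma inj2 {x y : ℂ} (h1 : x ≠ y) : Function.Injective ![x, y] := by
  intro i j hij; fin_cases i <;> fin_cases j <;> simp_all

lemma inj3 {x y z : ℂ} (h1 : x ≠ y) (h2 : x ≠ z) (h3 : y ≠ z) :
    Function.Injective ![x, y, z] := by
  intro i j hij; fin_cases i <;> fin_cases j <;> simp_all

lemma inj4 {x y z w : ℂ} (h1 : x ≠ y) (h2 : x ≠ z) (h3 : x ≠ w) (h4 : y ≠ z) (h5 : y ≠ w)
    (h6 : z ≠ w) : Function.Injective ![x, y, z, w] := by
  intro i j hij; fin_cases i <;> fin_cases j <;> simp_all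

lemma char_cases (a b : ℂ) (hua : a * (starRingEnd ℂ) a = 1) (hub : b * (starRingEnd ℂ) b = 1)
    (hab : a ≠ b) (n p : ℕ) (hp : 0 < p)
    (H : ∀ j : Fin 4, (a ^ p - 1) * a ^ (n + (j : ℕ))
        - (starRingEnd ℂ) (a ^ p - 1) * ((starRingEnd ℂ) a) ^ (n + (j : ℕ))
        - (b ^ p - 1) * b ^ (n + (j : ℕ))
        + (starRingEnd ℂ) (b ^ p - 1) * ((starRingEnd ℂ) b) ^ (n + (j : ℕ)) = 0) :
    ∃ q : ℕ, 0 < q ∧ a ^ q = b ^ q := by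
  set c := a ^ p - 1 with hc
  set d := b ^ p - 1 with hd
  have cinj : Function.Injective (starRingEnd ℂ) := RingHom.injective _
  have ha0 : a ≠ 0 := fun e => by simp [e] at hua
  have hb0 : b ≠ 0 := fun e => by simp [e] at hub
  have ha0' : (starRingEnd ℂ) a ≠ 0 := by simpa using ha0
  have hb0' : (starRingEnd ℂ) b ≠ 0 := by simpa using hb0
  have ha2 : a = (starRingEnd ℂ) a → a ^ 2 = 1 := fun e => by
    rw [pow_two]; nth_rewrite 2 [e]; exact hua
  have hb2 : b = (starRingEnd ℂ) b → b ^ 2 = 1 := fun e => by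
    rw [pow_two]; nth_rewrite 2 [e]; exact hub
  by_cases ha : a = (starRingEnd ℂ) a
  · by_cases hb : b = (starRingEnd ℂ) b
    · exact ⟨2, by norm_num, by rw [ha2 ha, hb2 hb]⟩
    · -- characters a, b, conj b
      have hacb : a ≠ (starRingEnd ℂ) b := by
        intro e
        have e2 : (starRingEnd ℂ) a = b := by
          have := congrArg (starRingEnd ℂ) e; rwa [Complex.conj_conj] at this
        exact hab (ha.trans e2)
      have key := vand_indep ![a, b, (starRingEnd ℂ) b] (inj3 hab hacb hb)
        (by intro i; fin_cases i <;> simpa)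
        ![c - (starRingEnd ℂ) c, -d, (starRingEnd ℂ) d] n
        (by intro j
            have hj := H ⟨(j : ℕ), by omega⟩
            rw [← ha] at hj
            simp only [Fin.sum_univ_three, Matrix.cons_val_zero, Matrix.cons_val_one,
              Matrix.head_cons, Matrix.cons_val_two, Matrix.tail_cons]
            linear_combination hj)
      have hbp : b ^ p = 1 := by
        have := key 1; rw [hd] at this; simp only [Matrix.cons_val_one, Matrix.head_cons, Matrix.cons_val_zero,
          neg_eq_zero] at this; rwa [sub_eq_zero] at this
      have e1 : a ^ (2 * p) = 1 := by rw [pow_mul, ha2 ha, one_pow]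
      have e2 : b ^ (2 * p) = 1 := by rw [mul_comm, pow_mul, hbp, one_pow]
      exact ⟨2 * p, by omega, by rw [e1, e2]⟩
  · by_cases hb : b = (starRingEnd ℂ) b
    · -- characters a, conj a, b
      have hcab : (starRingEnd ℂ) a ≠ b := by
        intro e
        have e2 : a = (starRingEnd ℂ) b := by
          have := congrArg (starRingEnd ℂ) e; rwa [Complex.conj_conj] at this
        exact hab (e2.trans hb.symm)
      have key := vand_indep ![a, (starRingEnd ℂ) a, b] (inj3 ha hab hcab)
        (by intro i; fin_cases i <;> simpa)
        ![c, -(starRingEnd ℂ) c, -d + (starRingEnd ℂ) d] n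
        (by intro j
            have hj := H ⟨(j : ℕ), by omega⟩
            rw [← hb] at hj
            simp only [Fin.sum_univ_three, Matrix.cons_val_zero, Matrix.cons_val_one,
              Matrix.head_cons, Matrix.cons_val_two, Matrix.tail_cons]
            linear_combination hj)
      have hap : a ^ p = 1 := by
        have := key 0; rw [hc] at this; simp only [Matrix.cons_val_zero] at this
        rwa [sub_eq_zero] at this
      have e1 : a ^ (2 * p) = 1 := by rw [mul_comm, pow_mul, hap, one_pow]
      have e2 : b ^ (2 * p) = 1 := by rw [pow_mul, hb2 hb, one_pow]
      exact ⟨2 * p, by omega, by rw [e1, e2]⟩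
    · by_cases hacb : a = (starRingEnd ℂ) b
      · -- characters a, conj a; b = conj a
        have hb' : b = (starRingEnd ℂ) a := by
          have := congrArg (starRingEnd ℂ) hacb; rw [Complex.conj_conj] at this
          exact this.symm
        have hcd : (starRingEnd ℂ) d = c := by
          rw [hd, hc]; simp [map_sub, map_pow, ← hacb]
        have key := vand_indep ![a, (starRingEnd ℂ) a] (inj2 ha)
          (by intro i; fin_cases i <;> simpa)
          ![c + (starRingEnd ℂ) d, -(starRingEnd ℂ) c - d] n
          (by intro j
              have hj := H ⟨(j : ℕ), by omega⟩
              rw [hb', Complex.conj_conj] at hj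
              simp only [Fin.sum_univ_two, Matrix.cons_val_zero, Matrix.cons_val_one,
                Matrix.head_cons]
              linear_combination hj)
        have hc0 : c = 0 := by
          have := key 0; simp only [Matrix.cons_val_zero] at this
          rw [hcd] at this
          linear_combination this / 2
        have hap : a ^ p = 1 := by rw [hc] at hc0; rwa [sub_eq_zero] at hc0
        refine ⟨p, hp, ?_⟩
        rw [hap, hb', ← map_pow, hap, _root_.map_one]
      · -- all four distinct
        have hcab : (starRingEnd ℂ) a ≠ b := fun e => hacb (by
          have := congrArg (starRingEnd ℂ) e; rwa [Complex.conj_conj] at this)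
        have hcacb : (starRingEnd ℂ) a ≠ (starRingEnd ℂ) b := fun e => hab (cinj e)
        have key := vand_indep ![a, (starRingEnd ℂ) a, b, (starRingEnd ℂ) b]
          (inj4 ha hab hacb hcab hcacb hb)
          (by intro i; fin_cases i <;> simpa)
          ![c, -(starRingEnd ℂ) c, -d, (starRingEnd ℂ) d] n
          (by intro j
              have hj := H ⟨(j : ℕ), by omega⟩
              simp only [Fin.sum_univ_four, Matrix.cons_val_zero, Matrix.cons_val_one,
                Matrix.head_cons, Matrix.cons_val_two, Matrix.tail_cons, Matrix.cons_val_three]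
              linear_combination hj)
        have hap : a ^ p = 1 := by
          have := key 0; simp only [Matrix.cons_val_zero] at this
          rw [hc] at this; rwa [sub_eq_zero] at this
        have hbp : b ^ p = 1 := by
          have := key 2; simp only [Matrix.cons_val_two, Matrix.tail_cons, Matrix.head_cons,
            neg_eq_zero] at this
          rw [hd] at this; rwa [sub_eq_zero] at this
        exact ⟨p, hp, by rw [hap, hbp]⟩
theorem stmt3 (α β : ℝ) (h : Irrational ((β - α) / (2 * Real.pi))) :
    (Set.range fun n : ℕ => Real.sin (α * n) - Real.sin (β * n)).Infinite := by
  by_contra hfin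
  rw [Set.not_infinite] at hfin
  set f : ℕ → ℝ := fun n : ℕ => Real.sin (α * n) - Real.sin (β * n) with hfdef
  set a : ℂ := Complex.exp (↑α * I) with hadef
  set b : ℂ := Complex.exp (↑β * I) with hbdef
  have hua : a * (starRingEnd ℂ) a = 1 := by
    rw [hadef, ← Complex.exp_conj]
    have : (starRingEnd ℂ) (↑α * I) = -(↑α * I) := by
      simp [map_mul, Complex.conj_ofReal, Complex.conj_I]
    rw [this, ← Complex.exp_add, add_neg_cancel, Complex.exp_zero]
  have hub : b * (starRingEnd ℂ) b = 1 := by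
    rw [hbdef, ← Complex.exp_conj]
    have : (starRingEnd ℂ) (↑β * I) = -(↑β * I) := by
      simp [map_mul, Complex.conj_ofReal, Complex.conj_I]
    rw [this, ← Complex.exp_add, add_neg_cancel, Complex.exp_zero]
  have hcontr : ∀ q : ℕ, 0 < q → a ^ q = b ^ q → False := by
    intro q hq he
    have hb0 : b ^ q ≠ 0 := pow_ne_zero _ (Complex.exp_ne_zero _)
    have key : Complex.exp (↑((β - α) * q) * I) * a ^ q = b ^ q := by
      rw [hadef, hbdef, ← Complex.exp_nat_mul, ← Complex.exp_nat_mul, ← Complex.exp_add]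
      congr 1
      push_cast
      ring
    rw [he] at key
    have hexp1 : Complex.exp (↑((β - α) * q) * I) = 1 := by
      have := mul_right_cancel₀ hb0 (key.trans (one_mul (b ^ q)).symm)
      exact this
    obtain ⟨m, hm⟩ := Complex.exp_eq_one_iff.1 hexp1
    have hre : (β - α) * q = m * (2 * Real.pi) := by
      have h2 : (↑((β - α) * q) : ℂ) = ↑m * (2 * ↑Real.pi) :=
        mul_right_cancel₀ Complex.I_ne_zero (by rw [hm]; ring)
      exact_mod_cast h2
    have hq0 : (q : ℝ) ≠ 0 := Nat.cast_ne_zero.2 hq.ne'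
    have : (β - α) / (2 * Real.pi) = ((m : ℚ) / (q : ℚ) : ℚ) := by
      push_cast
      rw [div_eq_div_iff (by positivity) hq0]
      linarith [hre]
    exact Rat.not_irrational _ (this ▸ h)
  have hab : a ≠ b := fun e => hcontr 1 one_pos (by rw [e])
  -- pigeonhole
  set g : ℕ → ℝ × ℝ × ℝ × ℝ := fun n => (f n, f (n + 1), f (n + 2), f (n + 3)) with hgdef
  have hgfin : (Set.range g).Finite := by
    apply Set.Finite.subset (hfin.prod (hfin.prod (hfin.prod hfin)))
    rintro _ ⟨n, rfl⟩
    exact ⟨⟨n, rfl⟩, ⟨n + 1, rfl⟩, ⟨n + 2, rfl⟩, ⟨n + 3, rfl⟩⟩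
  have : Finite (Set.range g) := hgfin.to_subtype
  obtain ⟨m₁, m₂, hne, heq⟩ := Finite.exists_ne_map_eq_of_infinite
    (fun n : ℕ => (⟨g n, Set.mem_range_self n⟩ : Set.range g))
  have heq' : g m₁ = g m₂ := Subtype.ext_iff.1 heq
  -- wlog m₁ < m₂
  obtain ⟨n, p, hp, hgnp⟩ : ∃ n p : ℕ, 0 < p ∧ g n = g (n + p) := by
    rcases lt_or_gt_of_ne hne with h' | h'
    · exact ⟨m₁, m₂ - m₁, by omega, by rw [heq']; congr 1; omega⟩
    · exact ⟨m₂, m₁ - m₂, by omega, by rw [← heq']; congr 1; omega⟩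
  have hfp : ∀ j : Fin 4, f (n + (j : ℕ)) = f (n + (j : ℕ) + p) := by
    intro j
    have h0 := congrArg Prod.fst hgnp
    have h1 := congrArg (Prod.fst ∘ Prod.snd) hgnp
    have h2 := congrArg (Prod.fst ∘ Prod.snd ∘ Prod.snd) hgnp
    have h3 := congrArg (Prod.snd ∘ Prod.snd ∘ Prod.snd) hgnp
    simp only [hgdef, Function.comp] at h0 h1 h2 h3
    fin_cases j
    · simpa using h0
    · simpa [show n + p + 1 = n + 1 + p by omega] using h1
    · simpa [show n + p + 2 = n + 2 + p by omega] using h2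
    · simpa [show n + p + 3 = n + 3 + p by omega] using h3
  have him : ∀ (x : ℝ) (k : ℕ), (Complex.exp (↑x * I) ^ k).im = Real.sin (x * k) := by
    intro x k
    rw [← Complex.exp_nat_mul]
    rw [show (↑k : ℂ) * (↑x * I) = ↑(x * k) * I by push_cast; ring]
    exact Complex.exp_ofReal_mul_I_im _
  have him0 : ∀ j : Fin 4,
      (a ^ (n + (j : ℕ)) * (a ^ p - 1) - b ^ (n + (j : ℕ)) * (b ^ p - 1)).im = 0 := by
    intro j
    have hf := hfp j
    set k := n + (j : ℕ)
    have expand : a ^ k * (a ^ p - 1) - b ^ k * (b ^ p - 1)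
        = (a ^ (k + p) - b ^ (k + p)) - (a ^ k - b ^ k) := by rw [pow_add, pow_add]; ring
    rw [expand]
    simp only [Complex.sub_im, hadef, hbdef, him]
    have e1 : f k = Real.sin (α * ↑k) - Real.sin (β * ↑k) := rfl
    have e2 : f (k + p) = Real.sin (α * ↑(k + p)) - Real.sin (β * ↑(k + p)) := rfl
    rw [e1, e2] at hf
    linarith [hf]
  have H : ∀ j : Fin 4, (a ^ p - 1) * a ^ (n + (j : ℕ))
      - (starRingEnd ℂ) (a ^ p - 1) * ((starRingEnd ℂ) a) ^ (n + (j : ℕ))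
      - (b ^ p - 1) * b ^ (n + (j : ℕ))
      + (starRingEnd ℂ) (b ^ p - 1) * ((starRingEnd ℂ) b) ^ (n + (j : ℕ)) = 0 := by
    intro j
    have hcj := Complex.conj_eq_iff_im.2 (him0 j)
    simp only [map_sub, map_mul, map_pow, map_one] at hcj ⊢
    linear_combination -hcj
  obtain ⟨q, hq, he⟩ := char_cases a b hua hub hab n p hp H
  exact hcontr q hq he
end

section
/- For the doubling map f : [0,1) → [0,1), f(x) = 2x mod 1, for every x ∈ [0,1), every nonempty open set V ⊆ [0,1), there exists y ∈ V such that liminf_{n→∞} |f^n(x) − f^n(y)| = 0. -/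
open Filter Topology

noncomputable def doubling : ℝ → ℝ := fun x => Int.fract (2 * x)

lemma doubling_iter (n : ℕ) (x : ℝ) :
    doubling^[n] (Int.fract x) = Int.fract (2 ^ n * x) := by
  induction n generalizing x with
  | zero => simp
  | succ n ih =>
    rw [Function.iterate_succ_apply]
    have h1 : doubling (Int.fract x) = Int.fract (2 * x) := by
      show Int.fract (2 * Int.fract x) = Int.fract (2 * x)
      have h : 2 * Int.fract x = 2 * x - ((2 * ⌊x⌋ : ℤ) : ℝ) := by
        rw [Int.fract]; push_cast; ring
      rw [h, Int.fract_sub_intCast]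
    rw [h1, ih (2 * x)]
    congr 1; ring

theorem stmt9 (x : ℝ) (hx : x ∈ Set.Ico (0:ℝ) 1)
    (V : Set ℝ) (hVopen : IsOpen V) (hV : (V ∩ Set.Ico (0:ℝ) 1).Nonempty) :
    ∃ y ∈ V ∩ Set.Ico (0:ℝ) 1,
      Filter.liminf (fun n : ℕ => |doubling^[n] x - doubling^[n] y|) atTop = 0 := by
  obtain ⟨z, hzV, hz0, hz1⟩ := hV
  obtain ⟨ε, hε, hball⟩ := Metric.isOpen_iff.mp hVopen z hzV
  set δ : ℝ := min (ε / 2) ((1 - z) / 2) with hδdef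
  have hδpos : 0 < δ := lt_min (by linarith) (by linarith)
  obtain ⟨N, hN⟩ := exists_pow_lt_of_lt_one hδpos (by norm_num : (1:ℝ)/2 < 1)
  have h2N : (0:ℝ) < 2 ^ N := by positivity
  set k : ℤ := ⌈(2 ^ N : ℝ) * (z - x)⌉ with hk
  set y : ℝ := x + (k : ℝ) / 2 ^ N with hy
  have hy1 : z ≤ y := by
    have := Int.le_ceil ((2 ^ N : ℝ) * (z - x))
    rw [hy, ← sub_le_iff_le_add', le_div_iff₀ h2N]
    linarith
  have hy2 : y < z + δ := by
    have hc := Int.ceil_lt_add_one ((2 ^ N : ℝ) * (z - x))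
    have hpow : ((1:ℝ)/2) ^ N = 1 / 2 ^ N := by
      rw [div_pow]; norm_num
    have h1 : (k : ℝ) / 2 ^ N < (z - x) + 1 / 2 ^ N := by
      rw [div_lt_iff₀ h2N]
      have : ((z - x) + 1 / 2 ^ N) * 2 ^ N = 2 ^ N * (z - x) + 1 := by
        field_simp
      rw [this]; exact hc
    have h2 : (1:ℝ) / 2 ^ N < δ := by rw [← hpow]; exact hN
    rw [hy]; linarith
  have hyz : y ∈ Set.Ico (0:ℝ) 1 := by
    constructor
    · linarith
    · have : δ ≤ (1 - z) / 2 := min_le_right _ _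
      linarith
  have hyV : y ∈ V := by
    apply hball
    rw [Metric.mem_ball, Real.dist_eq, abs_lt]
    have : δ ≤ ε / 2 := min_le_left _ _
    constructor <;> linarith
  refine ⟨y, ⟨hyV, hyz⟩, ?_⟩
  have hev : ∀ᶠ n in atTop, |doubling^[n] x - doubling^[n] y| = 0 := by
    rw [eventually_atTop]
    refine ⟨N, fun n hn => ?_⟩
    obtain ⟨m, rfl⟩ := Nat.exists_eq_add_of_le hn
    have hxf : Int.fract x = x := Int.fract_eq_self.mpr hx
    have hyf : Int.fract y = y := Int.fract_eq_self.mpr hyz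
    have hX : doubling^[N + m] x = Int.fract (2 ^ (N + m) * x) := by
      rw [← hxf, doubling_iter, hxf]
    have hY : doubling^[N + m] y = Int.fract (2 ^ (N + m) * y) := by
      rw [← hyf, doubling_iter, hyf]
    have key : (2 : ℝ) ^ (N + m) * y = 2 ^ (N + m) * x + ((2 ^ m * k : ℤ) : ℝ) := by
      rw [hy]
      push_cast
      rw [pow_add]
      field_simp
    rw [hX, hY, key, Int.fract_add_intCast, sub_self, abs_zero]
  have : Filter.liminf (fun n : ℕ => |doubling^[n] x - doubling^[n] y|) atTop
      = Filter.liminf (fun _ : ℕ => (0:ℝ)) atTop := by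
    apply Filter.liminf_congr hev
  rw [this, Filter.liminf_const]
end
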